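/- Let f, h ∈ ℂ with f ≠ 0 and h ≠ 0, and define V : ℂ² → ℝ by V(X, φ) = |f + h·X·φ|² + (1/4)·|h|²·|X|⁴. Then V(X, φ) > 0 for all (X, φ) ∈ ℂ², yet the infimum of V over ℂ² equals 0; in particular the infimum is not attained. (The Witten runaway model has a SUSY runaway direction: along φ = −f/(hX) with X → 0, V → 0.) -/

import Mathlib

/-- The Witten runaway model: the scalar potential is everywhere positive, its infimum is
`0`, and in particular the infimum is not attained. -/
theorem witten_runaway_potential (f h : ℂ) (hf : f ≠ 0) (hh : h ≠ 0)
    (V : ℂ × ℂ → ℝ)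
    (hV : ∀ p, V p = ‖f + h * p.1 * p.2‖ ^ 2
      + (1 / 4) * ‖h‖ ^ 2 * ‖p.1‖ ^ 4) :
    (∀ p, 0 < V p) ∧ IsGLB (Set.range V) 0 ∧ 0 ∉ Set.range V := by
  have hpos : ∀ p, 0 < V p := by
    intro p
    rw [hV]
    rcases eq_or_ne p.1 0 with h1 | h1
    · have : f + h * p.1 * p.2 = f := by rw [h1]; ring
      rw [this]
      have : 0 < ‖f‖ ^ 2 := by
        have := norm_pos_iff.mpr hf; positivity
      nlinarith [sq_nonneg (‖p.1‖), pow_nonneg (norm_nonneg p.1) 4]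
    · have : 0 < ‖p.1‖ ^ 4 := by
        have := norm_pos_iff.mpr h1; positivity
      have hh' : 0 < ‖h‖ ^ 2 := by
        have := norm_pos_iff.mpr hh; positivity
      nlinarith [sq_nonneg (‖f + h * p.1 * p.2‖)]
  have hsmall : ∀ ε : ℝ, 0 < ε → ∃ p, V p < ε := by
    intro ε hε
    -- choose X = t real small, φ = -f/(h*X)
    obtain ⟨t, ht0, ht⟩ : ∃ t : ℝ, 0 < t ∧ (1/4) * ‖h‖ ^ 2 * t ^ 4 < ε := by
      have hc : 0 < (1/4) * ‖h‖ ^ 2 := by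
        have := norm_pos_iff.mpr hh; positivity
      obtain ⟨t, ht0, ht1⟩ := exists_between (lt_min one_pos (div_pos hε hc))
      refine ⟨t, ht0, ?_⟩
      have ht1' : t < 1 := lt_of_lt_of_le ht1 (min_le_left _ _)
      have ht2 : t < ε / ((1/4) * ‖h‖ ^ 2) :=
        lt_of_lt_of_le ht1 (min_le_right _ _)
      have h4 : t ^ 4 ≤ t := by nlinarith [pow_pos ht0 2, pow_pos ht0 3, sq_nonneg t]
      calc (1/4) * ‖h‖ ^ 2 * t ^ 4 ≤ (1/4) * ‖h‖ ^ 2 * t := by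
            nlinarith
        _ < ε := by
            rw [lt_div_iff₀ hc] at ht2; linarith [ht2]
    refine ⟨((t : ℂ), -f / (h * t)), ?_⟩
    rw [hV]
    have htne : (t : ℂ) ≠ 0 := by exact_mod_cast ht0.ne'
    have hfirst : f + h * (t : ℂ) * (-f / (h * (t : ℂ))) = 0 := by
      field_simp
      ring
    rw [hfirst]
    simp only [norm_zero, Complex.norm_real, Real.norm_eq_abs, abs_of_pos ht0]
    linarith [ht]
  have hlb : ∀ x ∈ Set.range V, (0:ℝ) ≤ x := by
    rintro x ⟨p, rfl⟩; exact (hpos p).le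
  have hglb : IsGLB (Set.range V) 0 := by
    constructor
    · exact hlb
    · intro b hb
      by_contra hbneg
      push_neg at hbneg
      obtain ⟨p, hp⟩ := hsmall b hbneg
      exact absurd (hb ⟨p, rfl⟩) (not_le.mpr hp)
  refine ⟨hpos, hglb, ?_⟩
  rintro ⟨p, hp⟩
  exact (hpos p).ne' hp
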